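/- Let R → S be a morphism of z-algebras (with z central in both), M a z-finite R-module, and m a maximal ideal of z. Then the m-primary component commutes with base change: pr_m(S ⊗_R M) ≅ S ⊗_R pr_m(M) as S-modules. -/

import Mathlib

open TensorProduct

/-- The `m`-primary component of an `R`-module, for an ideal `m` of the
commutative ring `z` acting through `R`. -/
def primarySet (z R M : Type*) [CommRing z] [Ring R] [Algebra z R]
    [AddCommGroup M] [Module R M] (m : Ideal z) : Set M :=
  {x : M | ∃ n : ℕ, 1 ≤ n ∧ ∀ a ∈ m ^ n, algebraMap z R a • x = 0}

lemma geom_aux {z : Type*} [CommRing z] (c : z) (n : ℕ) :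
    1 - (1 - c) ^ n = c * ∑ i ∈ Finset.range n, (1 - c) ^ i := by
  have h := geom_sum_mul (1 - c) n
  linear_combination h

/-- key idempotent-like element construction -/
lemma exists_idem' (E z : Type*) [Field E] [CommRing z] [Algebra E z]
    (J m : Ideal z) (hJ : FiniteDimensional E (z ⧸ J)) :
    ∃ n : ℕ, 1 ≤ n ∧ ∃ e : z, (∀ a ∈ m ^ n, e * a ∈ J) ∧ (1 - e) ∈ m ^ n ∧ e * (1 - e) ∈ J := by
  classical
  haveI : IsArtinian E (z ⧸ J) := inferInstance
  haveI : IsArtinianRing (z ⧸ J) := isArtinian_of_tower E inferInstance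
  haveI : IsNoetherianRing (z ⧸ J) := isNoetherian_of_tower E inferInstance
  set m' : Ideal (z ⧸ J) := m.map (Ideal.Quotient.mk J) with hm'
  have hmono : Monotone (fun k : ℕ => OrderDual.toDual (m' ^ k : Ideal (z ⧸ J))) := by
    intro i j hij
    exact Ideal.pow_le_pow_right hij
  obtain ⟨n₀, hn₀⟩ := IsArtinian.monotone_stabilizes (⟨_, hmono⟩ : ℕ →o (Ideal (z ⧸ J))ᵒᵈ)
  set n := n₀ + 1 with hn
  have hstab : m' ^ n = m' ^ (n + 1) := by
    have h1 := hn₀ n (by omega)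
    have h2 := hn₀ (n + 1) (by omega)
    exact h1.symm.trans h2
  have hle : (m' ^ n : Ideal (z ⧸ J)) ≤ m' • (m' ^ n) := by
    rw [Ideal.smul_eq_mul, ← pow_succ']
    exact le_of_eq hstab
  have hfg : (m' ^ n : Ideal (z ⧸ J)).FG := IsNoetherian.noetherian _
  obtain ⟨r', hr'1, hr'0⟩ :=
    Submodule.exists_sub_one_mem_and_smul_eq_zero_of_fg_of_le_smul m' (m' ^ n) hfg hle
  -- find a ∈ m with mk a = r' - 1
  obtain ⟨a, ha, hmka⟩ := Ideal.mem_map_iff_of_surjective _ Ideal.Quotient.mk_surjective |>.mp hr'1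
  set rr : z := 1 + a with hrr
  have hmkrr : Ideal.Quotient.mk J rr = r' := by
    have : Ideal.Quotient.mk J rr = Ideal.Quotient.mk J a + 1 := by
      simp [hrr]; ring
    rw [this, hmka]; ring
  have hkill : ∀ b ∈ m ^ n, rr * b ∈ J := by
    intro b hb
    have hb' : Ideal.Quotient.mk J b ∈ m' ^ n := by
      rw [hm', ← Ideal.map_pow]
      exact Ideal.mem_map_of_mem _ hb
    have := hr'0 _ hb'
    rw [← Ideal.Quotient.eq_zero_iff_mem, map_mul, hmkrr]
    simpa [smul_eq_mul] using this
  refine ⟨n, by omega, 1 - (1 - rr) ^ n, ?_, ?_, ?_⟩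
  · intro b hb
    rw [geom_aux]
    have h2 : (rr * ∑ i ∈ Finset.range n, (1 - rr) ^ i) * b
        = (∑ i ∈ Finset.range n, (1 - rr) ^ i) * (rr * b) := by ring
    rw [h2]
    exact J.mul_mem_left _ (hkill b hb)
  · simp only [sub_sub_cancel]
    have : 1 - rr = -a := by rw [hrr]; ring
    rw [this]
    rw [neg_pow]
    exact Ideal.mul_mem_left _ _ (Ideal.pow_mem_pow ha n)
  · rw [sub_sub_cancel, geom_aux]
    have h1 : (1 - rr) ^ n ∈ m ^ n := by
      have h3 : 1 - rr = -a := by rw [hrr]; ring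
      rw [h3, neg_pow]
      exact Ideal.mul_mem_left _ _ (Ideal.pow_mem_pow ha n)
    have h2 : (rr * ∑ i ∈ Finset.range n, (1 - rr) ^ i) * (1 - rr) ^ n
        = (∑ i ∈ Finset.range n, (1 - rr) ^ i) * (rr * (1 - rr) ^ n) := by ring
    rw [h2]
    exact J.mul_mem_left _ (hkill _ h1)

lemma mcancel {z A N : Type*} [CommRing z] [Ring A] [Algebra z A] [AddCommGroup N]
    [Module A N] {m : Ideal z} {u : N} {c : z} (k : ℕ)
    (hk : ∀ a ∈ m ^ k, algebraMap z A a • u = 0) (hc : 1 - c ∈ m)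
    (hcu : algebraMap z A c • u = 0) : u = 0 := by
  have h1 : (1 - c) ^ k ∈ m ^ k := Ideal.pow_mem_pow hc k
  have h2 : algebraMap z A ((1 - c) ^ k) • u = 0 := hk _ h1
  have h3 : algebraMap z A ((∑ i ∈ Finset.range k, (1 - c) ^ i) * c) • u = 0 := by
    rw [map_mul, mul_smul, hcu, smul_zero]
  have h4 : (1 : z) = (1 - c) ^ k + (∑ i ∈ Finset.range k, (1 - c) ^ i) * c := by
    linear_combination geom_aux c k
  calc u = algebraMap z A (1 : z) • u := by simp
    _ = 0 := by rw [h4, map_add, add_smul, h2, h3, add_zero]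

lemma prim_add {z A N : Type*} [CommRing z] [Ring A] [Algebra z A] [AddCommGroup N]
    [Module A N] {m : Ideal z} {u v : N} (hu : u ∈ primarySet z A N m)
    (hv : v ∈ primarySet z A N m) : u + v ∈ primarySet z A N m := by
  obtain ⟨k, hk, hku⟩ := hu
  obtain ⟨l, _, hlv⟩ := hv
  refine ⟨max k l, le_trans hk (le_max_left _ _), fun a ha => ?_⟩
  have hak : a ∈ m ^ k := Ideal.pow_le_pow_right (le_max_left k l) ha
  have hal : a ∈ m ^ l := Ideal.pow_le_pow_right (le_max_right k l) ha
  rw [smul_add, hku a hak, hlv a hal, add_zero]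

lemma prim_neg {z A N : Type*} [CommRing z] [Ring A] [Algebra z A] [AddCommGroup N]
    [Module A N] {m : Ideal z} {u : N} (hu : u ∈ primarySet z A N m) :
    -u ∈ primarySet z A N m := by
  obtain ⟨k, hk, hku⟩ := hu
  exact ⟨k, hk, fun a ha => by rw [smul_neg, hku a ha, neg_zero]⟩

lemma tsmul {z R S M : Type*} [CommRing z] [CommRing R] [Algebra z R] [Ring S]
    [Algebra z S] [Algebra R S] [IsScalarTower z R S] [AddCommGroup M] [Module R M]
    (a : z) (s : S) (y : M) :
    algebraMap z S a • (s ⊗ₜ[R] y) = s ⊗ₜ[R] (algebraMap z R a • y) := by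
  rw [TensorProduct.smul_tmul', smul_eq_mul]
  have h : algebraMap z S a * s = algebraMap z R a • s := by
    rw [Algebra.smul_def, ← IsScalarTower.algebraMap_apply]
  rw [h, TensorProduct.smul_tmul]



/-- For a morphism of `z`-algebras `R → S` and a `z`-finite
`R`-module `M`, the `m`-primary component commutes with base change:
the natural map `S ⊗_R pr_m(M) → S ⊗_R M` is injective with image exactly
the `m`-primary component of `S ⊗_R M`, i.e. `pr_m(S ⊗_R M) ≅ S ⊗_R pr_m(M)`
as `S`-modules. -/
theorem stmt6 (E z R S M : Type*) [Field E] [CommRing z] [Algebra E z]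
    [CommRing R] [Algebra z R] [Ring S] [Algebra z S] [Algebra R S]
    [IsScalarTower z R S]
    [AddCommGroup M] [Module R M]
    (hfin : ∀ x : M, ∃ J : Ideal z, FiniteDimensional E (z ⧸ J) ∧
      ∀ a ∈ J, algebraMap z R a • x = 0)
    (m : Ideal z) (hm : m.IsMaximal)
    (Mm : Submodule R M) (hMm : (Mm : Set M) = primarySet z R M m) :
    Function.Injective ⇑(LinearMap.lTensor S Mm.subtype) ∧
    Set.range ⇑(LinearMap.lTensor S Mm.subtype)
      = primarySet z S (S ⊗[R] M) m := by
  classical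
  have hmem : ∀ x : M, x ∈ Mm ↔ x ∈ primarySet z R M m := fun x => by
    rw [← SetLike.mem_coe, hMm]
  have key : ∀ x : M, ∃ n : ℕ, 1 ≤ n ∧ ∃ e : z,
      (∀ a ∈ m ^ n, algebraMap z R (e * a) • x = 0) ∧ 1 - e ∈ m ^ n ∧
      algebraMap z R (e * (1 - e)) • x = 0 := by
    intro x
    obtain ⟨J, hJfd, hJk⟩ := hfin x
    obtain ⟨n, hn, e, he1, he2, he3⟩ := exists_idem' E z J m hJfd
    exact ⟨n, hn, e, fun a ha => hJk _ (he1 a ha), he2, hJk _ he3⟩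
  -- the complement submodule
  let Mc : Submodule R M :=
    { carrier := {x | ∃ c : z, 1 - c ∈ m ∧ algebraMap z R c • x = 0}
      add_mem' := by
        rintro x y ⟨c, hc, hcx⟩ ⟨d, hd, hdy⟩
        refine ⟨c * d, ?_, ?_⟩
        · have h : 1 - c * d = (1 - c) + c * (1 - d) := by ring
          rw [h]; exact m.add_mem hc (m.mul_mem_left _ hd)
        · have hx : algebraMap z R (c * d) • x = 0 := by
            rw [mul_comm, map_mul, mul_smul, hcx, smul_zero]
          have hy : algebraMap z R (c * d) • y = 0 := by
            rw [map_mul, mul_smul, hdy, smul_zero]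
          rw [smul_add, hx, hy, add_zero]
      zero_mem' := ⟨1, by simp, by simp⟩
      smul_mem' := by
        rintro r x ⟨c, hc, hcx⟩
        exact ⟨c, hc, by rw [← mul_smul, mul_comm, mul_smul, hcx, smul_zero]⟩ }
  have hMcMem : ∀ x : M, x ∈ Mc ↔ ∃ c : z, 1 - c ∈ m ∧ algebraMap z R c • x = 0 :=
    fun _ => Iff.rfl
  have hcompl : IsCompl Mm Mc := by
    constructor
    · refine Submodule.disjoint_def.mpr fun x hxm hxc => ?_
      obtain ⟨k, _, hkill⟩ := (hmem x).mp hxm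
      obtain ⟨c, hc, hcx⟩ := (hMcMem x).mp hxc
      exact mcancel k hkill hc hcx
    · rw [codisjoint_iff_le_sup]
      intro x _
      obtain ⟨n, hn, e, he1, he2, he3⟩ := key x
      have h1 : algebraMap z R e • x ∈ Mm := by
        refine (hmem _).mpr ⟨n, hn, fun a ha => ?_⟩
        rw [← mul_smul, ← map_mul, mul_comm a e]
        exact he1 a ha
      have h2 : x - algebraMap z R e • x ∈ Mc := by
        refine (hMcMem _).mpr ⟨e, Ideal.pow_le_self (by omega) he2, ?_⟩
        rw [smul_sub, ← mul_smul, ← map_mul, ← sub_smul, ← map_sub]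
        have h : e - e * e = e * (1 - e) := by ring
        rw [h]
        exact he3
      exact Submodule.mem_sup.mpr ⟨_, h1, _, h2, by abel⟩
    -- projections
  set p := Submodule.projectionOnto Mm Mc hcompl with hp
  set q := Submodule.projectionOnto Mc Mm hcompl.symm with hq
  have hps : p ∘ₗ Mm.subtype = LinearMap.id := by
    ext x
    simp [hp, Submodule.projectionOnto_apply_left]
  have hinj : Function.Injective ⇑(LinearMap.lTensor S Mm.subtype) := by
    have hcomp : (LinearMap.lTensor S p) ∘ₗ (LinearMap.lTensor S Mm.subtype)
        = LinearMap.id := by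
      rw [← LinearMap.lTensor_comp, hps, LinearMap.lTensor_id]
    intro u v huv
    have h1 : (LinearMap.lTensor S p) ((LinearMap.lTensor S Mm.subtype) u)
        = (LinearMap.lTensor S p) ((LinearMap.lTensor S Mm.subtype) v) := by rw [huv]
    rwa [← LinearMap.comp_apply, ← LinearMap.comp_apply, hcomp,
      LinearMap.id_apply, LinearMap.id_apply] at h1
  -- range ⊆ primary
  have hsub : Set.range ⇑(LinearMap.lTensor S Mm.subtype)
      ⊆ primarySet z S (S ⊗[R] M) m := by
    rintro t ⟨u, rfl⟩
    induction u using TensorProduct.induction_on with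
    | zero => exact ⟨1, le_refl 1, fun a _ => by rw [map_zero, smul_zero]⟩
    | tmul s y =>
      obtain ⟨k, hk, hkill⟩ := (hmem y).mp y.2
      refine ⟨k, hk, fun a ha => ?_⟩
      rw [LinearMap.lTensor_tmul, tsmul, Submodule.subtype_apply, hkill a ha, TensorProduct.tmul_zero]
    | add u v hu hv =>
      rw [map_add]
      exact prim_add hu hv
  -- Mc-part property in the tensor product
  have hMcT : ∀ w ∈ Set.range ⇑(LinearMap.lTensor S Mc.subtype),
      ∃ c : z, 1 - c ∈ m ∧ algebraMap z S c • w = 0 := by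
    rintro _ ⟨v, rfl⟩
    induction v using TensorProduct.induction_on with
    | zero => exact ⟨1, by simp, by rw [map_zero, smul_zero]⟩
    | tmul s y =>
      obtain ⟨c, hc, hcy⟩ := (hMcMem y).mp y.2
      refine ⟨c, hc, ?_⟩
      rw [LinearMap.lTensor_tmul, tsmul, Submodule.subtype_apply, hcy, TensorProduct.tmul_zero]
    | add v w hv hw =>
      obtain ⟨c, hc, hcv⟩ := hv
      obtain ⟨d, hd, hdw⟩ := hw
      refine ⟨c * d, ?_, ?_⟩
      · have h : 1 - c * d = (1 - c) + c * (1 - d) := by ring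
        rw [h]; exact m.add_mem hc (m.mul_mem_left _ hd)
      · rw [map_add, smul_add]
        have h1 : algebraMap z S (c * d) • (LinearMap.lTensor S Mc.subtype) v = 0 := by
          rw [mul_comm, map_mul, mul_smul, hcv, smul_zero]
        have h2 : algebraMap z S (c * d) • (LinearMap.lTensor S Mc.subtype) w = 0 := by
          rw [map_mul, mul_smul, hdw, smul_zero]
        rw [h1, h2, add_zero]
  -- primary ⊆ range
  have hsup : primarySet z S (S ⊗[R] M) m
      ⊆ Set.range ⇑(LinearMap.lTensor S Mm.subtype) := by
    intro t ht
    have hdecomp : Mm.subtype ∘ₗ p + Mc.subtype ∘ₗ q = LinearMap.id := by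
      ext x
      simp only [LinearMap.add_apply, LinearMap.comp_apply, LinearMap.id_apply,
        Submodule.coe_subtype]
      obtain ⟨y, hy, w, hw, hx⟩ := Submodule.mem_sup.mp
        (hcompl.codisjoint.eq_top ▸ Submodule.mem_top : x ∈ Mm ⊔ Mc)
      have hpx : p x = ⟨y, hy⟩ := by
        rw [← hx]
        show p (((⟨y, hy⟩ : Mm) : M) + ((⟨w, hw⟩ : Mc) : M)) = ⟨y, hy⟩
        rw [map_add, hp, Submodule.projectionOnto_apply_left,
          Submodule.projectionOnto_apply_right, add_zero]
      have hqx : q x = ⟨w, hw⟩ := by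
        rw [← hx]
        show q (((⟨y, hy⟩ : Mm) : M) + ((⟨w, hw⟩ : Mc) : M)) = ⟨w, hw⟩
        rw [map_add, hq, Submodule.projectionOnto_apply_left,
          Submodule.projectionOnto_apply_right, zero_add]
      rw [hpx, hqx, ← hx]
    have hsplit : t = (LinearMap.lTensor S (Mm.subtype ∘ₗ p)) t
        + (LinearMap.lTensor S (Mc.subtype ∘ₗ q)) t := by
      rw [← LinearMap.add_apply, ← LinearMap.lTensor_add, hdecomp,
        LinearMap.lTensor_id, LinearMap.id_apply]
    have hFt : (LinearMap.lTensor S (Mm.subtype ∘ₗ p)) t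
        ∈ Set.range ⇑(LinearMap.lTensor S Mm.subtype) := by
      rw [LinearMap.lTensor_comp]
      exact ⟨(LinearMap.lTensor S p) t, rfl⟩
    have hGt : (LinearMap.lTensor S (Mc.subtype ∘ₗ q)) t
        ∈ Set.range ⇑(LinearMap.lTensor S Mc.subtype) := by
      rw [LinearMap.lTensor_comp]
      exact ⟨(LinearMap.lTensor S q) t, rfl⟩
    obtain ⟨c, hc, hcu⟩ := hMcT _ hGt
    have hu_prim : (LinearMap.lTensor S (Mc.subtype ∘ₗ q)) t
        ∈ primarySet z S (S ⊗[R] M) m := by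
      have h1 : (LinearMap.lTensor S (Mc.subtype ∘ₗ q)) t
          = t - (LinearMap.lTensor S (Mm.subtype ∘ₗ p)) t :=
        eq_sub_of_add_eq' hsplit.symm
      rw [h1, sub_eq_add_neg]
      exact prim_add ht (prim_neg (hsub hFt))
    obtain ⟨k, _, hku⟩ := hu_prim
    have hu0 : (LinearMap.lTensor S (Mc.subtype ∘ₗ q)) t = 0 :=
      mcancel k hku hc hcu
    rw [hsplit, hu0, add_zero]
    exact hFt
  exact ⟨hinj, Set.Subset.antisymm hsub hsup⟩
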